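/- Let σ₀ be the 2×2 identity matrix and σ₁ the bit-flip (Pauli-X) matrix over ℂ. Let λ₀₀₀₀, λ₀₀₁₁, λ₁₁₀₀, λ₁₁₁₁ ∈ ℂ with |λ₀₀₀₀|² + |λ₀₀₁₁|² + |λ₁₁₀₀|² + |λ₁₁₁₁|² = 1 and 2(|λ₀₀₀₀|² + |λ₁₁₀₀|²) = |λ₀₀₁₁|² + |λ₁₁₁₁|², and set |ψ⟩ = λ₀₀₀₀|0000⟩ + λ₀₀₁₁|0011⟩ + λ₁₁₀₀|1100⟩ + λ₁₁₁₁|1111⟩ in (ℂ²)^{⊗4} and |λ| = |λ₀₀₀₀|² + |λ₁₁₀₀|². With T = 5, R = 3, P = 1, S = 0, define X_{1.2} = 1^{⊗2} ⊗ (R|00⟩⟨00| + S|01⟩⟨01| + T|10⟩⟨10| + P|11⟩⟨11|) and X_{2.2} = 1^{⊗2} ⊗ (R|00⟩⟨00| + T|01⟩⟨01| + S|10⟩⟨10| + P|11⟩⟨11|). For κ₁,κ₂,κ₃,κ₄ ∈ {0,1} set ρ_fin = (σ_{κ₁}⊗σ_{κ₂}⊗σ_{κ₃}⊗σ_{κ₄})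 |ψ⟩⟨ψ| (σ_{κ₁}⊗σ_{κ₂}⊗σ_{κ₃}⊗σ_{κ₄}) and E_{i.2} = tr(X_{i.2} ρ_fin). Then, independently of κ₁ and κ₂: E_{1.2} = E_{2.2} = 5|λ| when (κ₃,κ₄) = (0,0); E_{1.2} = 5|λ| and E_{2.2} = 10|λ| when (κ₃,κ₄) = (1,0); E_{1.2} = 10|λ| and E_{2.2} = 5|λ| when (κ₃,κ₄) = (0,1); and E_{1.2} = E_{2.2} = 7|λ| when (κ₃,κ₄) = (1,1). -/

import Mathlib

open Matrix

/-- The single-qubit operators: `sig 0` is the identity, `sig 1` the bit-flip. -/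
noncomputable def sig : Fin 2 → Matrix (Fin 2) (Fin 2) ℂ
  | 0 => 1
  | 1 => !![0, 1; 1, 0]

/-- Tensor (Kronecker) product of `n` one-qubit operators, realized as a matrix
indexed by `Fin n → Fin 2`. -/
noncomputable def tensorOp {n : ℕ} (A : Fin n → Matrix (Fin 2) (Fin 2) ℂ) :
    Matrix (Fin n → Fin 2) (Fin n → Fin 2) ℂ :=
  Matrix.of fun v w => ∏ j, A j (v j) (w j)

/-- The computational basis vector `|x⟩` of `(ℂ²)^⊗n`. -/
def basisKet {n : ℕ} (x : Fin n → Fin 2) : (Fin n → Fin 2) → ℂ :=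
  fun v => if v = x then 1 else 0

/-- The rank-one operator `|ψ⟩⟨ψ|`. -/
noncomputable def ketbra {n : ℕ} (ψ : (Fin n → Fin 2) → ℂ) :
    Matrix (Fin n → Fin 2) (Fin n → Fin 2) ℂ :=
  Matrix.vecMulVec ψ (star ψ)

/-- `Σ_{x,y} O x y |x y⟩⟨x y|` on qubits `i, j`, tensored with the identity on
all remaining qubits (a diagonal operator). -/
noncomputable def payoffOp {n : ℕ} (i j : Fin n) (O : Matrix (Fin 2) (Fin 2) ℝ) :
    Matrix (Fin n → Fin 2) (Fin n → Fin 2) ℂ :=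
  Matrix.of fun v w => if v = w then (O (v i) (v j) : ℂ) else 0

lemma sig_apply (κ x y : Fin 2) : sig κ x y = if y = x + κ then 1 else 0 := by
  fin_cases κ <;> fin_cases x <;> fin_cases y <;> simp [sig, Matrix.one_apply]

lemma addk_invol (κ v : Fin 4 → Fin 2) : v + κ + κ = v := by
  funext j
  have : ∀ a b : Fin 2, a + b + b = a := by decide
  exact this _ _

lemma eq_add_comm' (κ v w : Fin 4 → Fin 2) : (v = w + κ) ↔ (w = v + κ) := by
  constructor <;> rintro rfl <;> rw [addk_invol]

lemma tensor_sig_apply (κ : Fin 4 → Fin 2) (v w : Fin 4 → Fin 2) :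
    tensorOp (fun j => sig (κ j)) v w = if w = v + κ then 1 else 0 := by
  simp only [tensorOp, Matrix.of_apply, sig_apply, Finset.prod_boole]
  congr 1
  simp [funext_iff, eq_iff_iff]

lemma tensor_sig_apply' (κ : Fin 4 → Fin 2) (v w : Fin 4 → Fin 2) :
    tensorOp (fun j => sig (κ j)) v w = if v = w + κ then 1 else 0 := by
  rw [tensor_sig_apply]
  simp only [← eq_add_comm' κ v w]

lemma UMU_diag (M : Matrix (Fin 4 → Fin 2) (Fin 4 → Fin 2) ℂ) (κ v : Fin 4 → Fin 2) :
    (tensorOp (fun j => sig (κ j)) * M * tensorOp (fun j => sig (κ j))) v v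
      = M (v + κ) (v + κ) := by
  have h1 : ∀ b, (tensorOp (fun j => sig (κ j)) * M) v b = M (v + κ) b := by
    intro b
    simp [Matrix.mul_apply, tensor_sig_apply, ite_mul]
  simp [Matrix.mul_apply, h1, tensor_sig_apply' κ, mul_ite]

lemma trace_formula (ψ : (Fin 4 → Fin 2) → ℂ) (O : Matrix (Fin 2) (Fin 2) ℝ)
    (κ : Fin 4 → Fin 2) :
    (payoffOp 2 3 O * (tensorOp (fun j => sig (κ j)) * ketbra ψ * tensorOp (fun j => sig (κ j)))).trace
    = ∑ u : Fin 4 → Fin 2, (O (u 2 + κ 2) (u 3 + κ 3) : ℂ) * (ψ u * star (ψ u)) := by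
  have hdiag : ∀ v, (payoffOp (n := 4) 2 3 O *
      (tensorOp (fun j => sig (κ j)) * ketbra ψ * tensorOp (fun j => sig (κ j)))) v v
      = (O (v 2) (v 3) : ℂ) * (ψ (v + κ) * star (ψ (v + κ))) := by
    intro v
    rw [Matrix.mul_apply]
    have : ∀ w, payoffOp (n := 4) 2 3 O v w = if w = v then (O (v 2) (v 3) : ℂ) else 0 := by
      intro w; simp [payoffOp, eq_comm]
    simp only [this, ite_mul, zero_mul, Finset.sum_ite_eq', Finset.mem_univ, if_true,
      UMU_diag, ketbra, Matrix.vecMulVec_apply, Pi.star_apply]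
  rw [Matrix.trace]
  simp only [Matrix.diag_apply, hdiag]
  rw [← Equiv.sum_comp (Equiv.addRight κ)]
  refine Finset.sum_congr rfl fun u _ => ?_
  simp [addk_invol, Pi.add_apply]

lemma sum_eval (l0000 l0011 l1100 l1111 : ℂ) (c : (Fin 4 → Fin 2) → ℂ) :
    ∑ u : Fin 4 → Fin 2, c u *
      ((l0000 * basisKet ![0, 0, 0, 0] u + l0011 * basisKet ![0, 0, 1, 1] u
        + l1100 * basisKet ![1, 1, 0, 0] u + l1111 * basisKet ![1, 1, 1, 1] u) *
       star (l0000 * basisKet ![0, 0, 0, 0] u + l0011 * basisKet ![0, 0, 1, 1] u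
        + l1100 * basisKet ![1, 1, 0, 0] u + l1111 * basisKet ![1, 1, 1, 1] u)) =
      c ![0,0,0,0] * Complex.normSq l0000 + c ![0,0,1,1] * Complex.normSq l0011
        + c ![1,1,0,0] * Complex.normSq l1100 + c ![1,1,1,1] * Complex.normSq l1111 := by
  have key : ∀ u : Fin 4 → Fin 2, c u *
      ((l0000 * basisKet ![0, 0, 0, 0] u + l0011 * basisKet ![0, 0, 1, 1] u
        + l1100 * basisKet ![1, 1, 0, 0] u + l1111 * basisKet ![1, 1, 1, 1] u) *
       star (l0000 * basisKet ![0, 0, 0, 0] u + l0011 * basisKet ![0, 0, 1, 1] u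
        + l1100 * basisKet ![1, 1, 0, 0] u + l1111 * basisKet ![1, 1, 1, 1] u)) =
      (if u = ![0,0,0,0] then c u * Complex.normSq l0000 else 0)
    + (if u = ![0,0,1,1] then c u * Complex.normSq l0011 else 0)
    + (if u = ![1,1,0,0] then c u * Complex.normSq l1100 else 0)
    + (if u = ![1,1,1,1] then c u * Complex.normSq l1111 else 0) := by
    intro u
    by_cases h1 : u = ![0,0,0,0]
    · subst h1
      simp (config := { decide := true }) [basisKet, Complex.mul_conj]
    by_cases h2 : u = ![0,0,1,1]
    · subst h2
      simp (config := { decide := true }) [basisKet, Complex.mul_conj]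
    by_cases h3 : u = ![1,1,0,0]
    · subst h3
      simp (config := { decide := true }) [basisKet, Complex.mul_conj]
    by_cases h4 : u = ![1,1,1,1]
    · subst h4
      simp (config := { decide := true }) [basisKet, Complex.mul_conj]
    · simp [basisKet, h1, h2, h3, h4]
  rw [Finset.sum_congr rfl (fun u _ => key u)]
  rw [Finset.sum_add_distrib, Finset.sum_add_distrib, Finset.sum_add_distrib]
  simp [Finset.sum_ite_eq']

/-- In the Iqbal–Toor protocol with initial state
`λ₀₀₀₀|0000⟩ + λ₀₀₁₁|0011⟩ + λ₁₁₀₀|1100⟩ + λ₁₁₁₁|1111⟩` satisfying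
`2(|λ₀₀₀₀|² + |λ₁₁₀₀|²) = |λ₀₀₁₁|² + |λ₁₁₁₁|²`, and PD payoffs
`T = 5, R = 3, P = 1, S = 0`, the second-stage expected payoffs are
`(5|λ|,5|λ|)`, `(5|λ|,10|λ|)`, `(10|λ|,5|λ|)`, `(7|λ|,7|λ|)` according as
`(κ₃,κ₄)` equals `(0,0)`, `(1,0)`, `(0,1)`, `(1,1)`, independently of `κ₁,κ₂`,
where `|λ| = |λ₀₀₀₀|² + |λ₁₁₀₀|²`. -/
theorem stmt_4 (l0000 l0011 l1100 l1111 : ℂ)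
    (hunit : Complex.normSq l0000 + Complex.normSq l0011 + Complex.normSq l1100
      + Complex.normSq l1111 = 1)
    (hcond : 2 * (Complex.normSq l0000 + Complex.normSq l1100)
      = Complex.normSq l0011 + Complex.normSq l1111)
    (κ₁ κ₂ κ₃ κ₄ : Fin 2) :
    let ψ : (Fin 4 → Fin 2) → ℂ := fun v =>
      l0000 * basisKet ![0, 0, 0, 0] v + l0011 * basisKet ![0, 0, 1, 1] v
        + l1100 * basisKet ![1, 1, 0, 0] v + l1111 * basisKet ![1, 1, 1, 1] v
    let X12 := payoffOp (n := 4) 2 3 !![3, 0; 5, 1]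
    let X22 := payoffOp (n := 4) 2 3 !![3, 5; 0, 1]
    let U := tensorOp ![sig κ₁, sig κ₂, sig κ₃, sig κ₄]
    let ρfin := U * ketbra ψ * U
    let lam : ℝ := Complex.normSq l0000 + Complex.normSq l1100
    ((κ₃, κ₄) = (0, 0) →
        (X12 * ρfin).trace = ((5 * lam : ℝ) : ℂ) ∧ (X22 * ρfin).trace = ((5 * lam : ℝ) : ℂ))
      ∧ ((κ₃, κ₄) = (1, 0) →
        (X12 * ρfin).trace = ((5 * lam : ℝ) : ℂ) ∧ (X22 * ρfin).trace = ((10 * lam : ℝ) : ℂ))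
      ∧ ((κ₃, κ₄) = (0, 1) →
        (X12 * ρfin).trace = ((10 * lam : ℝ) : ℂ) ∧ (X22 * ρfin).trace = ((5 * lam : ℝ) : ℂ))
      ∧ ((κ₃, κ₄) = (1, 1) →
        (X12 * ρfin).trace = ((7 * lam : ℝ) : ℂ) ∧ (X22 * ρfin).trace = ((7 * lam : ℝ) : ℂ)) := by
  intro ψ X12 X22 U ρfin lam
  have hU : U = tensorOp (fun j => sig (![κ₁, κ₂, κ₃, κ₄] j)) := by
    exact congrArg tensorOp (funext fun j => by fin_cases j <;> rfl)
  have hcC : (Complex.normSq l0011 : ℂ) + Complex.normSq l1111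
      = 2 * ((Complex.normSq l0000 : ℂ) + Complex.normSq l1100) := by
    exact_mod_cast congrArg (fun r : ℝ => (r : ℂ)) hcond.symm
  have key : ∀ O : Matrix (Fin 2) (Fin 2) ℝ,
      (payoffOp (n := 4) 2 3 O * ρfin).trace =
        (O κ₃ κ₄ : ℂ) * Complex.normSq l0000 + (O (1 + κ₃) (1 + κ₄) : ℂ) * Complex.normSq l0011
        + (O κ₃ κ₄ : ℂ) * Complex.normSq l1100
        + (O (1 + κ₃) (1 + κ₄) : ℂ) * Complex.normSq l1111 := by
    intro O
    show (payoffOp (n := 4) 2 3 O * (U * ketbra ψ * U)).trace = _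
    rw [hU, trace_formula, sum_eval l0000 l0011 l1100 l1111]
    norm_num
    simp only [show ∀ a b c d : Fin 2, (![a, b, c, d] : Fin 4 → Fin 2) 2 = c from fun _ _ _ _ => rfl,
      show ∀ a b c d : Fin 2, (![a, b, c, d] : Fin 4 → Fin 2) 3 = d from fun _ _ _ _ => rfl, zero_add, add_zero]
  have hlam : ((5 : ℝ) * lam : ℝ) = 5 * (Complex.normSq l0000 + Complex.normSq l1100) := rfl
  refine ⟨?_, ?_, ?_, ?_⟩ <;> intro h <;>
    rw [Prod.mk.injEq] at h <;> obtain ⟨h3, h4⟩ := h <;> subst h3 <;> subst h4 <;>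
    constructor <;>
    · rw [key]
      show _ = ((_ * (Complex.normSq l0000 + Complex.normSq l1100) : ℝ) : ℂ)
      simp only [show (1:Fin 2)+1 = 0 from by decide, show (1:Fin 2)+0 = 1 from by decide,
        show (0:Fin 2)+0 = 0 from by decide, show (0:Fin 2)+1 = 1 from by decide,
        Matrix.cons_val_zero, Matrix.cons_val_one, Matrix.head_cons, Matrix.cons_val',
        Matrix.head_fin_const, Matrix.empty_val', Matrix.cons_val_fin_one]
      push_cast [Matrix.cons_val_zero, Matrix.cons_val_one, Matrix.head_cons,
        Matrix.of_apply, Matrix.cons_val', Matrix.empty_val', Matrix.cons_val_fin_one,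
        Matrix.head_fin_const]
      all_goals first
        | ring1
        | linear_combination hcC
        | linear_combination (3:ℂ)*hcC
        | linear_combination (5:ℂ)*hcC
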